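/- Let γ, κ, λ > 0 and set c = min(γ, κ)/λ. If c ≤ 1, then q₀(λ, γ, κ) ≥ √c / 7. Equivalently, in a balanced two-sided FIFO queue with arrival rate λ and abandonment rates γ, κ, the abandonment probability is at least (1/7)·√(min(γ,κ)/λ), so an abandonment probability of at most η forces λ ≥ min(γ,κ)/(49·η²). -/

import Mathlib

/-- Partial product `P n c = ∏_{j=1}^{n} 1/(1 + j·c)`, with `P 0 c = 1`. -/
noncomputable def partialProd (n : ℕ) (c : ℝ) : ℝ :=
  ∏ j ∈ Finset.Icc 1 n, (1 + (j : ℝ) * c)⁻¹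

/-- The empty-queue (abandonment) probability of the balanced two-sided FIFO
queue: `q₀(λ, γ, κ) = (1 + ∑_{n=1}^∞ [P_n(γ/λ) + P_n(κ/λ)])⁻¹`. -/
noncomputable def q0 (lam gam kap : ℝ) : ℝ :=
  (1 + ∑' n : ℕ, (partialProd (n + 1) (gam / lam) + partialProd (n + 1) (kap / lam)))⁻¹

lemma pp_pos {c : ℝ} (hc : 0 < c) (n : ℕ) : 0 < partialProd n c := by
  apply Finset.prod_pos
  intro j hj
  have : (0:ℝ) < 1 + (j:ℝ) * c := by positivity
  exact inv_pos.2 this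

lemma pp_le_one {c : ℝ} (hc : 0 < c) (n : ℕ) : partialProd n c ≤ 1 := by
  apply Finset.prod_le_one
  · intro j _; positivity
  · intro j _
    have h1 : (1:ℝ) ≤ 1 + (j:ℝ) * c := by
      have : (0:ℝ) ≤ (j:ℝ) * c := by positivity
      linarith
    exact inv_le_one_of_one_le₀ h1

lemma pp_anti {c a : ℝ} (hc : 0 < c) (hca : c ≤ a) (n : ℕ) :
    partialProd n a ≤ partialProd n c := by
  apply Finset.prod_le_prod
  · intro j _
    have ha : 0 < a := lt_of_lt_of_le hc hca
    positivity
  · intro j hj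
    have h1 : (0:ℝ) < 1 + (j:ℝ) * c := by positivity
    apply inv_anti₀ h1
    have : (j:ℝ) * c ≤ (j:ℝ) * a := by
      apply mul_le_mul_of_nonneg_left hca (by positivity)
    linarith

lemma pp_le_geo {c : ℝ} (hc : 0 < c) {N n : ℕ} (h : N ≤ n) :
    partialProd n c ≤ partialProd N c * ((1 + (N:ℝ) * c)⁻¹) ^ (n - N) := by
  have hsplit : partialProd N c * ∏ j ∈ Finset.Ioc N n, (1 + (j:ℝ) * c)⁻¹
      = partialProd n c := by
    unfold partialProd
    rw [show Finset.Icc 1 N = Finset.Ioc 0 N from by rw [← Finset.Icc_add_one_left_eq_Ioc, zero_add],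
        show Finset.Icc 1 n = Finset.Ioc 0 n from by rw [← Finset.Icc_add_one_left_eq_Ioc, zero_add]]
    exact Finset.prod_Ioc_consecutive _ (Nat.zero_le N) h
  rw [← hsplit]
  apply mul_le_mul_of_nonneg_left _ (pp_pos hc N).le
  have hcard : (Finset.Ioc N n).card = n - N := Nat.card_Ioc N n
  calc ∏ j ∈ Finset.Ioc N n, (1 + (j:ℝ) * c)⁻¹
      ≤ ∏ _j ∈ Finset.Ioc N n, (1 + (N:ℝ) * c)⁻¹ := by
        apply Finset.prod_le_prod
        · intro j _
          have : (0:ℝ) < 1 + (j:ℝ) * c := by positivity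
          positivity
        · intro j hj
          have hNj : (N:ℝ) ≤ (j:ℝ) := by
            exact_mod_cast (Finset.mem_Ioc.1 hj).1.le
          have h1 : (0:ℝ) < 1 + (N:ℝ) * c := by positivity
          apply inv_anti₀ h1
          nlinarith
    _ = ((1 + (N:ℝ) * c)⁻¹) ^ (n - N) := by
        rw [Finset.prod_const, hcard]

lemma pp_le_pow {c : ℝ} (hc : 0 < c) (n : ℕ) :
    partialProd n c ≤ ((1 + c)⁻¹) ^ n := by
  unfold partialProd
  calc ∏ j ∈ Finset.Icc 1 n, (1 + (j:ℝ) * c)⁻¹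
      ≤ ∏ _j ∈ Finset.Icc 1 n, (1 + c)⁻¹ := by
        apply Finset.prod_le_prod
        · intro j _
          have : (0:ℝ) < 1 + (j:ℝ) * c := by positivity
          positivity
        · intro j hj
          have h1 : (1:ℝ) ≤ (j:ℝ) := by
            exact_mod_cast (Finset.mem_Icc.1 hj).1
          have h0 : (0:ℝ) < 1 + c := by positivity
          apply inv_anti₀ h0
          nlinarith
    _ = ((1 + c)⁻¹) ^ n := by
        rw [Finset.prod_const, Nat.card_Icc]; norm_num

lemma pp_summable {c : ℝ} (hc : 0 < c) : Summable (fun n => partialProd (n + 1) c) := by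
  have hr0 : (0:ℝ) ≤ (1 + c)⁻¹ := by positivity
  have hr1 : (1 + c)⁻¹ < 1 := by
    rw [inv_lt_one_iff₀]; right; linarith
  apply Summable.of_nonneg_of_le (fun n => (pp_pos hc _).le)
    (fun n => ?_) (summable_geometric_of_lt_one hr0 hr1)
  calc partialProd (n + 1) c ≤ ((1 + c)⁻¹) ^ (n + 1) := pp_le_pow hc _
    _ ≤ ((1 + c)⁻¹) ^ n := by
        apply pow_le_pow_of_le_one hr0 hr1.le
        omega

set_option maxHeartbeats 1600000 in
lemma tsum_pp_le {c : ℝ} (hc : 0 < c) (hc1 : c ≤ 1) :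
    ∑' n : ℕ, partialProd (n + 1) c ≤ 3 / Real.sqrt c := by
  set s := Real.sqrt c with hs_def
  have hs : 0 < s := Real.sqrt_pos.2 hc
  have hs1 : s ≤ 1 := by
    rw [hs_def, show (1:ℝ) = Real.sqrt 1 from (Real.sqrt_one).symm]
    exact Real.sqrt_le_sqrt hc1
  have hss : s * s = c := Real.mul_self_sqrt hc.le
  set N : ℕ := ⌈s⁻¹⌉₊ with hN_def
  have hNge : s⁻¹ ≤ (N:ℝ) := Nat.le_ceil _
  have hNle : (N:ℝ) ≤ s⁻¹ + 1 := by
    have := Nat.ceil_lt_add_one (a := s⁻¹) (by positivity)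
    linarith
  have hNle2 : (N:ℝ) ≤ 2 / s := by
    have h1s : (1:ℝ) ≤ s⁻¹ := by
      rw [le_inv_comm₀ one_pos hs] at *
      · simpa using hs1
    rw [div_eq_mul_inv]; linarith
  have hNpos : 0 < N := by
    have : (0:ℝ) < (N:ℝ) := lt_of_lt_of_le (by positivity) hNge
    exact_mod_cast this
  have hNc : s ≤ (N:ℝ) * c := by
    have : s⁻¹ * c ≤ (N:ℝ) * c := mul_le_mul_of_nonneg_right hNge hc.le
    calc s = s⁻¹ * c := by
          rw [← hss]; field_simp
      _ ≤ (N:ℝ) * c := this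
  set r : ℝ := (1 + (N:ℝ) * c)⁻¹ with hr_def
  have hNc0 : 0 < (N:ℝ) * c := by positivity
  have hr0 : 0 ≤ r := by positivity
  have hr1 : r < 1 := by
    rw [hr_def, inv_lt_one_iff₀]; right; linarith
  have hsum := pp_summable hc
  -- split the sum
  have hsplit := Summable.sum_add_tsum_nat_add (f := fun n => partialProd (n + 1) c) N hsum
  rw [← hsplit]
  have hhead : ∑ n ∈ Finset.range N, partialProd (n + 1) c ≤ (N:ℝ) := by
    calc ∑ n ∈ Finset.range N, partialProd (n + 1) c
        ≤ ∑ _n ∈ Finset.range N, (1:ℝ) :=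
          Finset.sum_le_sum fun n _ => pp_le_one hc _
      _ = (N:ℝ) := by simp
  have htail_term : ∀ n : ℕ, partialProd (n + N + 1) c ≤ r ^ (n + 1) := by
    intro n
    have h1 : N ≤ n + N + 1 := by omega
    have := pp_le_geo hc h1
    have hsub : n + N + 1 - N = n + 1 := by omega
    rw [hsub] at this
    calc partialProd (n + N + 1) c ≤ partialProd N c * r ^ (n + 1) := this
      _ ≤ 1 * r ^ (n + 1) := by
          apply mul_le_mul_of_nonneg_right (pp_le_one hc N) (by positivity)
      _ = r ^ (n + 1) := one_mul _
  have hgeo_sum : Summable (fun n : ℕ => r ^ (n + 1)) := by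
    simpa [pow_succ'] using (summable_geometric_of_lt_one hr0 hr1).mul_left r
  have hsum_tail : Summable (fun n : ℕ => partialProd (n + N + 1) c) := by
    have h := (summable_nat_add_iff (f := fun n => partialProd (n + 1) c) N).2 hsum
    exact h
  have htail : ∑' n : ℕ, partialProd (n + N + 1) c ≤ ∑' n : ℕ, r ^ (n + 1) :=
    Summable.tsum_le_tsum htail_term hsum_tail hgeo_sum
  have hgeo_val : ∑' n : ℕ, r ^ (n + 1) = r * (1 - r)⁻¹ := by
    rw [show (fun n : ℕ => r ^ (n + 1)) = fun n : ℕ => r * r ^ n from by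
      funext n; rw [pow_succ']]
    rw [tsum_mul_left, tsum_geometric_of_lt_one hr0 hr1]
  have hval : r * (1 - r)⁻¹ = ((N:ℝ) * c)⁻¹ := by
    rw [hr_def]
    have h1 : (1:ℝ) + (N:ℝ) * c ≠ 0 := by positivity
    have h2 : ((N:ℝ) * c) ≠ 0 := ne_of_gt hNc0
    field_simp
    ring
  have hinv : ((N:ℝ) * c)⁻¹ ≤ 1 / s := by
    rw [one_div]
    exact inv_anti₀ hs hNc
  calc ∑ n ∈ Finset.range N, partialProd (n + 1) c
        + ∑' n : ℕ, partialProd (n + N + 1) c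
      ≤ (N:ℝ) + r * (1 - r)⁻¹ := by
        apply add_le_add hhead
        rw [← hgeo_val]; exact htail
    _ ≤ 2 / s + 1 / s := by
        apply add_le_add hNle2
        rw [hval]; exact hinv
    _ = 3 / s := by ring

/-- with `c = min(γ,κ)/λ ≤ 1`, the abandonment probability
satisfies `q₀(λ, γ, κ) ≥ √c / 7`; hence abandonment probability at most `η`
forces `λ ≥ min(γ,κ)/(49·η²)`. -/
theorem statement12 (lam gam kap : ℝ) (hlam : 0 < lam) (hgam : 0 < gam) (hkap : 0 < kap)
    (hc : min gam kap / lam ≤ 1) :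
    Real.sqrt (min gam kap / lam) / 7 ≤ q0 lam gam kap ∧
      (∀ η : ℝ, 0 < η → q0 lam gam kap ≤ η → min gam kap / (49 * η ^ 2) ≤ lam) := by
  set m := min gam kap with hm_def
  have hm : 0 < m := lt_min hgam hkap
  set c := m / lam with hc_def
  have hc0 : 0 < c := div_pos hm hlam
  set s := Real.sqrt c with hs_def
  have hs : 0 < s := Real.sqrt_pos.2 hc0
  have hs1 : s ≤ 1 := by
    rw [hs_def, show (1:ℝ) = Real.sqrt 1 from (Real.sqrt_one).symm]
    exact Real.sqrt_le_sqrt hc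
  have hss : s * s = c := Real.mul_self_sqrt hc0.le
  have hga0 : 0 < gam / lam := div_pos hgam hlam
  have hka0 : 0 < kap / lam := div_pos hkap hlam
  have hga : c ≤ gam / lam := by
    rw [hc_def]; gcongr; exact min_le_left _ _
  have hka : c ≤ kap / lam := by
    rw [hc_def]; gcongr; exact min_le_right _ _
  have Sg := pp_summable hga0
  have Sk := pp_summable hka0
  have Sc := pp_summable hc0
  have hSg : ∑' n : ℕ, partialProd (n + 1) (gam / lam) ≤ 3 / s :=
    le_trans (Summable.tsum_le_tsum (fun n => pp_anti hc0 hga _) Sg Sc) (tsum_pp_le hc0 hc)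
  have hSk : ∑' n : ℕ, partialProd (n + 1) (kap / lam) ≤ 3 / s :=
    le_trans (Summable.tsum_le_tsum (fun n => pp_anti hc0 hka _) Sk Sc) (tsum_pp_le hc0 hc)
  have hSsum : ∑' n : ℕ, (partialProd (n + 1) (gam / lam) + partialProd (n + 1) (kap / lam))
      = (∑' n : ℕ, partialProd (n + 1) (gam / lam))
        + ∑' n : ℕ, partialProd (n + 1) (kap / lam) := Summable.tsum_add Sg Sk
  have hSnn : 0 ≤ ∑' n : ℕ, (partialProd (n + 1) (gam / lam) + partialProd (n + 1) (kap / lam)) := by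
    apply tsum_nonneg
    intro n
    have := (pp_pos hga0 (n+1)).le
    have := (pp_pos hka0 (n+1)).le
    linarith
  have h1s : (1:ℝ) ≤ 1 / s := by
    rw [le_div_iff₀ hs]; linarith
  have hbound : 1 + ∑' n : ℕ, (partialProd (n + 1) (gam / lam) + partialProd (n + 1) (kap / lam))
      ≤ 7 / s := by
    rw [hSsum]
    have : (1:ℝ) + 3 / s + 3 / s ≤ 7 / s := by
      have : 1 / s + 3 / s + 3 / s = 7 / s := by ring
      linarith
    linarith
  have hq : s / 7 ≤ q0 lam gam kap := by
    rw [q0]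
    have hpos : (0:ℝ) < 1 + ∑' n : ℕ,
        (partialProd (n + 1) (gam / lam) + partialProd (n + 1) (kap / lam)) := by linarith
    have h7s : (0:ℝ) < 7 / s := by positivity
    calc s / 7 = (7 / s)⁻¹ := by rw [inv_div]
      _ ≤ (1 + ∑' n : ℕ, (partialProd (n + 1) (gam / lam)
            + partialProd (n + 1) (kap / lam)))⁻¹ :=
          inv_anti₀ hpos hbound
  refine ⟨hq, ?_⟩
  intro η hη hqη
  have hsη : s ≤ 7 * η := by
    have : s / 7 ≤ η := le_trans hq hqη
    linarith
  have hcη : c ≤ 49 * η ^ 2 := by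
    calc c = s * s := hss.symm ▸ rfl
      _ ≤ (7 * η) * (7 * η) := mul_le_mul hsη hsη hs.le (by positivity)
      _ = 49 * η ^ 2 := by ring
  have h49 : (0:ℝ) < 49 * η ^ 2 := by positivity
  rw [div_le_iff₀ hlam] at hcη
  rw [div_le_iff₀ h49]
  linarith [hcη]
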